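/- Let μ^k, ν^k, μ, ν be probability measures on ℝ with finite first moments such that W₁(μ^k, μ) → 0 and W₁(ν^k, ν) → 0. Let μ ∧_cd ν denote the measure whose put function is the convex hull (largest convex minorant) of min(P_μ, P_ν). Then W₁(μ^k ∧_cd ν^k, μ ∧_cd ν) → 0. -/

import Mathlib

open MeasureTheory ProbabilityTheory Filter

noncomputable section

/-- The set of couplings of two measures on `ℝ`. -/
def Couplings (μ ν : Measure ℝ) : Set (Measure (ℝ × ℝ)) :=
  {π | π.map Prod.fst = μ ∧ π.map Prod.snd = ν}

/-- Wasserstein-1 distance, defined via couplings. -/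
def W1 (μ ν : Measure ℝ) : ℝ :=
  sInf ((fun π : Measure (ℝ × ℝ) => ∫ p, |p.1 - p.2| ∂π) '' Couplings μ ν)

/-- The put function `P_η(x) = ∫ (x - t)⁺ η(dt)`. -/
def put (η : Measure ℝ) (x : ℝ) : ℝ := ∫ t, max (x - t) 0 ∂η

/-- The largest convex minorant (convex hull) of a function on ℝ. -/
def convexMinorant (g : ℝ → ℝ) : ℝ → ℝ :=
  fun x => sSup {y : ℝ | ∃ h : ℝ → ℝ,
    ConvexOn ℝ Set.univ h ∧ (∀ z, h z ≤ g z) ∧ y = h x}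

section Puts

variable {η : Measure ℝ}

lemma put_integrand_int [IsProbabilityMeasure η] (hη : Integrable (fun x : ℝ => x) η) (x : ℝ) :
    Integrable (fun t => max (x - t) 0) η := by
  have h : Integrable (fun t : ℝ => |x| + |t|) η := (integrable_const |x|).add hη.abs
  refine h.mono' ?_ ?_
  · exact (continuous_const.sub continuous_id).max continuous_const |>.aestronglyMeasurable
  · refine Filter.Eventually.of_forall fun t => ?_
    rw [Real.norm_eq_abs, abs_of_nonneg (le_max_right _ _)]
    refine max_le ?_ (by positivity)
    calc x - t ≤ |x - t| := le_abs_self _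
    _ ≤ |x| + |t| := abs_sub _ _

lemma put_nonneg (η : Measure ℝ) (x : ℝ) : 0 ≤ put η x :=
  integral_nonneg fun t => le_max_right _ _

lemma couplings_nonempty (α β : Measure ℝ) [IsProbabilityMeasure α] [IsProbabilityMeasure β] :
    (Couplings α β).Nonempty := by
  refine ⟨α.prod β, ?_, ?_⟩
  · simp [Measure.map_fst_prod]
  · simp [Measure.map_snd_prod]

lemma W1_nonneg (α β : Measure ℝ) [IsProbabilityMeasure α] [IsProbabilityMeasure β] :
    0 ≤ W1 α β := by
  refine le_csInf ((couplings_nonempty α β).image _) ?_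
  rintro b ⟨π, -, rfl⟩
  exact integral_nonneg fun p => abs_nonneg _

lemma W1_le_cost {α β : Measure ℝ} {π : Measure (ℝ × ℝ)} (hπ : π ∈ Couplings α β) :
    W1 α β ≤ ∫ p, |p.1 - p.2| ∂π := by
  refine csInf_le ⟨0, ?_⟩ ⟨π, hπ, rfl⟩
  rintro b ⟨π', -, rfl⟩
  exact integral_nonneg fun p => abs_nonneg _

lemma abs_put_sub_put_le_W1 {α β : Measure ℝ} [IsProbabilityMeasure α] [IsProbabilityMeasure β]
    (hα : Integrable (fun x : ℝ => x) α) (hβ : Integrable (fun x : ℝ => x) β) (x : ℝ) :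
    |put α x - put β x| ≤ W1 α β := by
  refine le_csInf ((couplings_nonempty α β).image _) ?_
  rintro b ⟨π, ⟨hπ1, hπ2⟩, rfl⟩
  have hfst : Integrable (fun p : ℝ × ℝ => p.1) π := by
    have := (integrable_map_measure (f := Prod.fst (α := ℝ) (β := ℝ))
      (g := fun x : ℝ => x) (by rw [hπ1]; exact hα.aestronglyMeasurable)
      measurable_fst.aemeasurable).mp (by rw [hπ1]; exact hα)
    exact this
  have hsnd : Integrable (fun p : ℝ × ℝ => p.2) π := by
    have := (integrable_map_measure (f := Prod.snd (α := ℝ) (β := ℝ))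
      (g := fun x : ℝ => x) (by rw [hπ2]; exact hβ.aestronglyMeasurable)
      measurable_snd.aemeasurable).mp (by rw [hπ2]; exact hβ)
    exact this
  have hπprob : IsProbabilityMeasure π := by
    constructor
    have h := Measure.map_apply (μ := π) measurable_fst (MeasurableSet.univ)
    rw [hπ1] at h
    simpa using h.symm
  have habs : Integrable (fun p : ℝ × ℝ => |x| + (|p.1| + |p.2|)) π :=
    (integrable_const _).add (hfst.abs.add hsnd.abs)
  have h1 : put α x = ∫ p, max (x - p.1) 0 ∂π := by
    rw [put, ← hπ1, integral_map measurable_fst.aemeasurable]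
    exact ((continuous_const.sub continuous_id).max continuous_const).aestronglyMeasurable
  have h2 : put β x = ∫ p, max (x - p.2) 0 ∂π := by
    rw [put, ← hπ2, integral_map measurable_snd.aemeasurable]
    exact ((continuous_const.sub continuous_id).max continuous_const).aestronglyMeasurable
  have hint1 : Integrable (fun p : ℝ × ℝ => max (x - p.1) 0) π := by
    refine habs.mono' (((continuous_const.sub continuous_fst).max continuous_const).aestronglyMeasurable) ?_
    refine Filter.Eventually.of_forall fun p => ?_
    rw [Real.norm_eq_abs, abs_of_nonneg (le_max_right _ _)]
    refine max_le ?_ (by positivity)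
    calc x - p.1 ≤ |x - p.1| := le_abs_self _
    _ ≤ |x| + |p.1| := abs_sub _ _
    _ ≤ |x| + (|p.1| + |p.2|) := by linarith [abs_nonneg p.2]
  have hint2 : Integrable (fun p : ℝ × ℝ => max (x - p.2) 0) π := by
    refine habs.mono' (((continuous_const.sub continuous_snd).max continuous_const).aestronglyMeasurable) ?_
    refine Filter.Eventually.of_forall fun p => ?_
    rw [Real.norm_eq_abs, abs_of_nonneg (le_max_right _ _)]
    refine max_le ?_ (by positivity)
    calc x - p.2 ≤ |x - p.2| := le_abs_self _
    _ ≤ |x| + |p.2| := abs_sub _ _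
    _ ≤ |p.1| + (|x| + |p.2|) := le_add_of_nonneg_left (abs_nonneg _)
    _ = |x| + (|p.1| + |p.2|) := by ring
  rw [h1, h2, ← integral_sub hint1 hint2]
  calc |∫ p, (max (x - p.1) 0 - max (x - p.2) 0) ∂π|
      ≤ ∫ p, |max (x - p.1) 0 - max (x - p.2) 0| ∂π := by
        simpa [Real.norm_eq_abs] using
          norm_integral_le_integral_norm (fun p : ℝ × ℝ => max (x - p.1) 0 - max (x - p.2) 0) (μ := π)
    _ ≤ ∫ p, |p.1 - p.2| ∂π := by
        refine integral_mono (hint1.sub hint2).abs (hfst.sub hsnd).abs fun p => ?_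
        calc |max (x - p.1) 0 - max (x - p.2) 0| ≤ |(x - p.1) - (x - p.2)| :=
              abs_max_sub_max_le_abs _ _ _
          _ = |p.1 - p.2| := by rw [show (x - p.1) - (x - p.2) = -(p.1 - p.2) by ring, abs_neg]

end Puts

section CM

lemma convexMinorant_le_shift {g₁ g₂ : ℝ → ℝ} {c : ℝ} (hg₁ : ∀ x, 0 ≤ g₁ x)
    (hc : 0 ≤ c) (hle : ∀ x, g₂ x ≤ g₁ x + c) (x : ℝ) :
    convexMinorant g₂ x ≤ convexMinorant g₁ x + c := by
  have hmem0 : (0:ℝ) ∈ {y : ℝ | ∃ h : ℝ → ℝ,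
      ConvexOn ℝ Set.univ h ∧ (∀ z, h z ≤ g₁ z) ∧ y = h x} :=
    ⟨fun _ => 0, convexOn_const 0 convex_univ, fun z => hg₁ z, rfl⟩
  have hbdd : BddAbove {y : ℝ | ∃ h : ℝ → ℝ,
      ConvexOn ℝ Set.univ h ∧ (∀ z, h z ≤ g₁ z) ∧ y = h x} := by
    refine ⟨g₁ x, ?_⟩
    rintro y ⟨h, -, hle', rfl⟩
    exact hle' x
  have hnn : 0 ≤ sSup {y : ℝ | ∃ h : ℝ → ℝ,
      ConvexOn ℝ Set.univ h ∧ (∀ z, h z ≤ g₁ z) ∧ y = h x} := le_csSup hbdd hmem0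
  have e1 : convexMinorant g₁ x = sSup {y : ℝ | ∃ h : ℝ → ℝ,
      ConvexOn ℝ Set.univ h ∧ (∀ z, h z ≤ g₁ z) ∧ y = h x} := rfl
  have e2 : convexMinorant g₂ x = sSup {y : ℝ | ∃ h : ℝ → ℝ,
      ConvexOn ℝ Set.univ h ∧ (∀ z, h z ≤ g₂ z) ∧ y = h x} := rfl
  rw [e1, e2]
  refine Real.sSup_le ?_ (by linarith)
  rintro y ⟨h, hconv, hle', rfl⟩
  have hmem : h x - c ∈ {y : ℝ | ∃ h : ℝ → ℝ,
      ConvexOn ℝ Set.univ h ∧ (∀ z, h z ≤ g₁ z) ∧ y = h x} := by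
    refine ⟨fun z => h z - c, hconv.sub (concaveOn_const c convex_univ), fun z => ?_, rfl⟩
    have h1 := hle' z
    have h2 := hle z
    show h z - c ≤ g₁ z
    linarith
  have := le_csSup hbdd hmem
  linarith

end CM

section Quantile

open Set

/-- Quantile function. -/
def qtl (η : Measure ℝ) : ℝ → ℝ :=
  fun u => if u ∈ Set.Ioo (0:ℝ) 1 then sInf {x | u ≤ cdf η x} else 0

variable {η : Measure ℝ} [IsProbabilityMeasure η]

lemma qtl_set_nonempty {u : ℝ} (hu : u < 1) : {x | u ≤ cdf η x}.Nonempty := by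
  have h := (tendsto_cdf_atTop η).eventually (eventually_ge_nhds hu)
  rcases h.exists with ⟨x, hx⟩
  exact ⟨x, hx⟩

lemma qtl_set_bddBelow {u : ℝ} (hu : 0 < u) : BddBelow {x | u ≤ cdf η x} := by
  have h := (tendsto_cdf_atBot η).eventually (eventually_lt_nhds hu)
  rcases h.exists with ⟨x0, hx0⟩
  refine ⟨x0, fun y hy => ?_⟩
  by_contra hxy
  push_neg at hxy
  exact absurd (le_trans hy (monotone_cdf η hxy.le)) (not_le.mpr hx0)

lemma qtl_eq {u : ℝ} (hu : u ∈ Ioo (0:ℝ) 1) : qtl η u = sInf {x | u ≤ cdf η x} := if_pos hu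

lemma le_cdf_qtl {u : ℝ} (hu : u ∈ Ioo (0:ℝ) 1) : u ≤ cdf η (qtl η u) := by
  rw [qtl_eq hu]
  set q := sInf {x | u ≤ cdf η x} with hq
  have key : ∀ r ∈ Ioi q, u ≤ cdf η r := by
    intro r hr
    obtain ⟨s, hs, hsr⟩ := (csInf_lt_iff (qtl_set_bddBelow hu.1) (qtl_set_nonempty hu.2)).mp hr
    exact le_trans hs (monotone_cdf η hsr.le)
  have : u ≤ ⨅ r : Ioi q, cdf η r := le_ciInf fun r => key r r.2
  rwa [(cdf η).iInf_Ioi_eq q] at this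

lemma qtl_le_iff {u x : ℝ} (hu : u ∈ Ioo (0:ℝ) 1) : qtl η u ≤ x ↔ u ≤ cdf η x := by
  constructor
  · intro h
    exact le_trans (le_cdf_qtl hu) (monotone_cdf η h)
  · intro h
    rw [qtl_eq hu]
    exact csInf_le (qtl_set_bddBelow hu.1) h

lemma lt_qtl_iff {u x : ℝ} (hu : u ∈ Ioo (0:ℝ) 1) : x < qtl η u ↔ cdf η x < u := by
  rw [← not_le, ← not_le, qtl_le_iff hu]

lemma qtl_monoOn {u v : ℝ} (hu : u ∈ Ioo (0:ℝ) 1) (hv : v ∈ Ioo (0:ℝ) 1) (huv : u ≤ v) :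
    qtl η u ≤ qtl η v := by
  rw [qtl_eq hu, qtl_eq hv]
  exact csInf_le_csInf (qtl_set_bddBelow hu.1) (qtl_set_nonempty hv.2)
    (fun x hx => le_trans huv hx)

lemma measurable_qtl (η : Measure ℝ) [IsProbabilityMeasure η] : Measurable (qtl η) := by
  refine measurable_of_Iic fun x => ?_
  have hpre : qtl η ⁻¹' Iic x =
      (Ioo (0:ℝ) 1 ∩ Iic (cdf η x)) ∪ (if 0 ≤ x then (Ioo (0:ℝ) 1)ᶜ else ∅) := by
    ext u
    by_cases hu : u ∈ Ioo (0:ℝ) 1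
    · simp only [mem_preimage, mem_Iic, qtl_le_iff hu, mem_union, mem_inter_iff, hu, true_and]
      constructor
      · intro h; exact Or.inl h
      · rintro (h | h)
        · exact h
        · split_ifs at h with hx
          · exact absurd hu h
          · exact absurd h (Set.notMem_empty u)
    · have hq : qtl η u = 0 := if_neg hu
      simp only [mem_preimage, mem_Iic, hq, mem_union, mem_inter_iff, hu, false_and, false_or]
      by_cases hx : 0 ≤ x
      · simp [if_pos hx, hu, hx]
      · simp [if_neg hx, hx]

  rw [hpre]
  refine MeasurableSet.union (measurableSet_Ioo.inter measurableSet_Iic) ?_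
  split_ifs
  · exact measurableSet_Ioo.compl
  · exact MeasurableSet.empty

end Quantile

section Map

open Set

lemma unif_prob : IsProbabilityMeasure (volume.restrict (Ioo (0:ℝ) 1)) := by
  constructor
  simp [Real.volume_Ioo]

lemma map_qtl (η : Measure ℝ) [IsProbabilityMeasure η] :
    Measure.map (qtl η) (volume.restrict (Ioo (0:ℝ) 1)) = η := by
  haveI := unif_prob
  haveI : IsProbabilityMeasure (Measure.map (qtl η) (volume.restrict (Ioo (0:ℝ) 1))) :=
    Measure.isProbabilityMeasure_map (measurable_qtl η).aemeasurable
  refine Measure.ext_of_Iic _ _ fun x => ?_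
  rw [Measure.map_apply (measurable_qtl η) measurableSet_Iic,
    Measure.restrict_apply (measurable_qtl η measurableSet_Iic)]
  have hset : qtl η ⁻¹' Iic x ∩ Ioo 0 1 = Ioo (0:ℝ) 1 ∩ Iic (cdf η x) := by
    ext u
    simp only [mem_inter_iff, mem_preimage, mem_Iic]
    constructor
    · rintro ⟨h, hu⟩
      exact ⟨hu, (qtl_le_iff hu).mp h⟩
    · rintro ⟨hu, h⟩
      exact ⟨(qtl_le_iff hu).mpr h, hu⟩
  rw [hset, ← ofReal_cdf η x]
  rcases lt_or_ge (cdf η x) 1 with h1 | h1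
  · have : Ioo (0:ℝ) 1 ∩ Iic (cdf η x) = Ioc 0 (cdf η x) := by
      ext u
      simp only [mem_inter_iff, mem_Ioo, mem_Iic, mem_Ioc]
      constructor
      · rintro ⟨⟨h2, _⟩, h4⟩; exact ⟨h2, h4⟩
      · rintro ⟨h2, h3⟩; exact ⟨⟨h2, lt_of_le_of_lt h3 h1⟩, h3⟩
    rw [this, Real.volume_Ioc, sub_zero]
  · have h1' : cdf η x = 1 := le_antisymm (cdf_le_one η x) h1
    have : Ioo (0:ℝ) 1 ∩ Iic (cdf η x) = Ioo (0:ℝ) 1 := by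
      rw [h1']
      exact inter_eq_left.mpr fun u hu => le_of_lt hu.2
    rw [this, Real.volume_Ioo, h1']
    norm_num

end Map

section PutCdf

open Set

variable {η : Measure ℝ} [IsProbabilityMeasure η]

lemma put_sub_put (hη : Integrable (fun x : ℝ => x) η) {a b : ℝ} (hab : a ≤ b) :
    put η b - put η a = ∫ s in Ioc a b, cdf η s := by
  haveI hfin : IsFiniteMeasure (volume.restrict (Ioc a b)) := by
    constructor
    rw [Measure.restrict_apply_univ]
    simp [Real.volume_Ioc]
  have h1 : put η b - put η a = ∫ t, (max (b - t) 0 - max (a - t) 0) ∂η :=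
    (integral_sub (put_integrand_int hη b) (put_integrand_int hη a)).symm
  set f : ℝ → ℝ → ℝ := fun t s => Set.indicator (Ici t) (fun _ => (1:ℝ)) s with hf
  have key1 : ∀ t : ℝ, ∫ s in Ioc a b, f t s = max (b - t) 0 - max (a - t) 0 := by
    intro t
    rw [hf]
    rw [setIntegral_indicator measurableSet_Ici, setIntegral_const]
    rcases le_or_gt t a with hta | hta
    · have : Ioc a b ∩ Ici t = Ioc a b := inter_eq_left.mpr fun s hs => le_trans hta hs.1.le
      rw [this, measureReal_def, Real.volume_Ioc]
      rw [ENNReal.toReal_ofReal (by linarith)]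
      rw [max_eq_left (by linarith), max_eq_left (by linarith)]
      simp
    · rcases le_or_gt t b with htb | htb
      · have : Ioc a b ∩ Ici t = Icc t b := by
          ext s
          simp only [mem_inter_iff, mem_Ioc, mem_Icc, mem_Ici]
          constructor
          · rintro ⟨⟨_, h2⟩, h3⟩; exact ⟨h3, h2⟩
          · rintro ⟨h1', h2⟩; exact ⟨⟨lt_of_lt_of_le hta h1', h2⟩, h1'⟩
        rw [this, measureReal_def, Real.volume_Icc, ENNReal.toReal_ofReal (by linarith)]
        rw [max_eq_left (by linarith), max_eq_right (by linarith)]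
        simp
      · have : Ioc a b ∩ Ici t = ∅ := by
          ext s
          simp only [mem_inter_iff, mem_Ioc, mem_Ici, mem_empty_iff_false, iff_false, not_and]
          rintro ⟨_, h2⟩ h3
          linarith
        rw [this]
        rw [max_eq_right (by linarith), max_eq_right (by linarith)]
        simp
  have key2 : ∀ s : ℝ, ∫ t, f t s ∂η = cdf η s := by
    intro s
    have : ∀ t : ℝ, f t s = Set.indicator (Iic s) (fun _ => (1:ℝ)) t := by
      intro t
      rw [hf]
      simp only [Set.indicator, mem_Ici, mem_Iic]
    rw [show (fun t => f t s) = Set.indicator (Iic s) (fun _ => (1:ℝ)) from funext this]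
    rw [integral_indicator_const _ measurableSet_Iic, cdf_eq_real]
    simp
  have hswap : ∫ t, (∫ s in Ioc a b, f t s) ∂η = ∫ s in Ioc a b, (∫ t, f t s ∂η) := by
    refine integral_integral_swap ?_
    have huncurry : Function.uncurry f = Set.indicator {p : ℝ × ℝ | p.1 ≤ p.2} (fun _ => (1:ℝ)) := by
      funext p
      simp only [Function.uncurry, hf, Set.indicator, mem_Ici, mem_setOf_eq]
    rw [huncurry]
    exact (integrable_const (1:ℝ)).indicator (measurableSet_le measurable_fst measurable_snd)
  rw [h1, ← funext key1, hswap]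
  exact integral_congr_ae (Filter.Eventually.of_forall fun s => key2 s)

lemma cdf_lt_of_lt_qtl {u s : ℝ} (hu : u ∈ Ioo (0:ℝ) 1) (hs : s < qtl η u) : cdf η s < u :=
  (lt_qtl_iff hu).mp hs

/-- Subgradient inequality: `u` is a subgradient of `put η` at `qtl η u`. -/
lemma put_subgradient (hη : Integrable (fun x : ℝ => x) η) {u : ℝ} (hu : u ∈ Ioo (0:ℝ) 1)
    (x : ℝ) : u * (x - qtl η u) ≤ put η x - put η (qtl η u) := by
  set q := qtl η u with hq
  have hcdf_int : ∀ c d : ℝ, IntegrableOn (fun s => cdf η s) (Ioc c d) volume := by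
    intro c d
    haveI : IsFiniteMeasure (volume.restrict (Ioc c d)) := by
      constructor
      rw [Measure.restrict_apply_univ]
      simp [Real.volume_Ioc]
    refine (integrable_const (1:ℝ)).mono' ((monotone_cdf η).measurable.aestronglyMeasurable) ?_
    exact Filter.Eventually.of_forall fun s => by
      rw [Real.norm_eq_abs, abs_of_nonneg (cdf_nonneg η s)]; exact cdf_le_one η s
  rcases le_or_gt q x with hqx | hqx
  · have h1 : put η x - put η q = ∫ s in Ioc q x, cdf η s := put_sub_put hη hqx
    have h2 : u * (x - q) = ∫ s in Ioc q x, u := by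
      rw [setIntegral_const, measureReal_def, Real.volume_Ioc, ENNReal.toReal_ofReal (by linarith)]
      rw [smul_eq_mul, mul_comm]
    rw [h1, h2]
    refine setIntegral_mono_on ((integrableOn_const_iff).mpr ?_) (hcdf_int q x) measurableSet_Ioc ?_
    · right; rw [Real.volume_Ioc]; exact ENNReal.ofReal_lt_top
    · intro s hs
      exact le_trans (le_cdf_qtl hu) (monotone_cdf η hs.1.le)
  · have h1 : put η q - put η x = ∫ s in Ioc x q, cdf η s := put_sub_put hη hqx.le
    have h2 : u * (q - x) = ∫ s in Ioc x q, u := by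
      rw [setIntegral_const, measureReal_def, Real.volume_Ioc, ENNReal.toReal_ofReal (by linarith)]
      rw [smul_eq_mul, mul_comm]
    have h3 : ∫ s in Ioc x q, cdf η s ≤ ∫ s in Ioc x q, u := by
      rw [integral_Ioc_eq_integral_Ioo, integral_Ioc_eq_integral_Ioo]
      refine setIntegral_mono_on ((hcdf_int x q).mono_set Ioo_subset_Ioc_self) ?_ measurableSet_Ioo ?_
      · refine (integrableOn_const_iff).mpr ?_
        right; rw [Real.volume_Ioo]; exact ENNReal.ofReal_lt_top
      · intro s hs
        exact (cdf_lt_of_lt_qtl hu hs.2).le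
    nlinarith [h1, h2, h3]

end PutCdf

section Sandwich

open Set

lemma qtl_le_qtl_add {α β : Measure ℝ} [IsProbabilityMeasure α] [IsProbabilityMeasure β]
    (hα : Integrable (fun x : ℝ => x) α) (hβ : Integrable (fun x : ℝ => x) β)
    {c δ u : ℝ} (hc : ∀ x, |put α x - put β x| ≤ c) (hδ : 0 < δ)
    (hu : u ∈ Ioo (0:ℝ) 1) (huδ : u + δ ∈ Ioo (0:ℝ) 1) :
    qtl α u ≤ qtl β (u + δ) + 2 * c / δ := by
  set Qa := qtl α u with hQa
  set Qb := qtl β (u + δ) with hQb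
  have h1 := put_subgradient hβ huδ Qa
  have h2 := put_subgradient hα hu Qb
  have h3 := abs_le.mp (hc Qa)
  have h4 := abs_le.mp (hc Qb)
  have h5 : δ * (Qa - Qb) ≤ 2 * c := by nlinarith [h1, h2, h3.1, h3.2, h4.1, h4.2]
  have h6 : Qa - Qb ≤ 2 * c / δ := by
    rw [le_div_iff₀ hδ]
    linarith [h5]
  linarith

lemma tendsto_put_sub_id {η : Measure ℝ} [IsProbabilityMeasure η]
    (hη : Integrable (fun x : ℝ => x) η) :
    Tendsto (fun x => put η x - x) atTop (nhds (- ∫ t, t ∂η)) := by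
  have heq : ∀ x : ℝ, put η x - x = ∫ t, (max (x - t) 0 - x) ∂η := by
    intro x
    rw [integral_sub (put_integrand_int hη x) (integrable_const x)]
    simp [put]
  have hlim : Tendsto (fun x => ∫ t, (max (x - t) 0 - x) ∂η) atTop (nhds (∫ t, -t ∂η)) := by
    refine tendsto_integral_filter_of_dominated_convergence (fun t => |t|)
      (Filter.Eventually.of_forall fun x => ?_) ?_ hη.abs ?_
    · exact (((continuous_const.sub continuous_id).max continuous_const).sub
        continuous_const).aestronglyMeasurable
    · filter_upwards [eventually_ge_atTop (0:ℝ)] with x hx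
      refine Filter.Eventually.of_forall fun t => ?_
      rw [Real.norm_eq_abs]
      rcases le_or_gt t x with h | h
      · rw [max_eq_left (by linarith)]
        simp [abs_neg]
      · rw [max_eq_right (by linarith)]
        rw [abs_of_nonpos (by linarith), abs_of_nonneg (by linarith)]
        linarith
    · refine Filter.Eventually.of_forall fun t => ?_
      refine Tendsto.congr' ?_ tendsto_const_nhds
      filter_upwards [eventually_ge_atTop t] with x hx
      rw [max_eq_left (by linarith)]
      ring
  rw [show (- ∫ t, t ∂η) = ∫ t, -t ∂η by rw [integral_neg]]
  exact hlim.congr fun x => (heq x).symm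

lemma abs_mean_sub_mean_le {α β : Measure ℝ} [IsProbabilityMeasure α] [IsProbabilityMeasure β]
    (hα : Integrable (fun x : ℝ => x) α) (hβ : Integrable (fun x : ℝ => x) β)
    {c : ℝ} (hc : ∀ x, |put α x - put β x| ≤ c) :
    |(∫ t, t ∂α) - ∫ t, t ∂β| ≤ c := by
  have h := (tendsto_put_sub_id hα).sub (tendsto_put_sub_id hβ)
  have h' : Tendsto (fun x => put α x - put β x) atTop
      (nhds ((- ∫ t, t ∂α) - (- ∫ t, t ∂β))) := by
    refine h.congr fun x => by ring
  have habs : Tendsto (fun x => |put α x - put β x|) atTop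
      (nhds (|(- ∫ t, t ∂α) - (- ∫ t, t ∂β)|)) := h'.abs
  have hle : |(- ∫ t, t ∂α) - (- ∫ t, t ∂β)| ≤ c :=
    le_of_tendsto habs (Filter.Eventually.of_forall hc)
  calc |(∫ t, t ∂α) - ∫ t, t ∂β| = |(- ∫ t, t ∂α) - (- ∫ t, t ∂β)| := by
        rw [show (- ∫ t, t ∂α) - (- ∫ t, t ∂β) = -((∫ t, t ∂α) - ∫ t, t ∂β) by ring, abs_neg]
    _ ≤ c := hle

lemma integral_abs_eq (η : Measure ℝ) [IsProbabilityMeasure η]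
    (hη : Integrable (fun x : ℝ => x) η) :
    ∫ t, |t| ∂η = (∫ t, t ∂η) + 2 * put η 0 := by
  have heq : ∀ t : ℝ, |t| = t + 2 * max (0 - t) 0 := by
    intro t
    rcases le_or_gt 0 t with h | h
    · rw [abs_of_nonneg h, max_eq_right (by linarith)]; ring
    · rw [abs_of_neg h, max_eq_left (by linarith)]; ring
  calc ∫ t, |t| ∂η = ∫ t, (t + 2 * max (0 - t) 0) ∂η := by
        exact integral_congr_ae (Filter.Eventually.of_forall heq)
    _ = (∫ t, t ∂η) + 2 * put η 0 := by
        rw [integral_add hη ((put_integrand_int hη 0).const_mul 2),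
          MeasureTheory.integral_const_mul]
        rfl

end Sandwich

section DCT

lemma tendsto_integral_abs_sub {μ : Measure ℝ} [IsFiniteMeasure μ] {Fk : ℕ → ℝ → ℝ} {G : ℝ → ℝ}
    (hFk_int : ∀ k, Integrable (Fk k) μ) (hG_int : Integrable G μ)
    (hae : ∀ᵐ u ∂μ, Tendsto (fun k => Fk k u) atTop (nhds (G u)))
    (hmoments : Tendsto (fun k => ∫ u, |Fk k u| ∂μ) atTop (nhds (∫ u, |G u| ∂μ))) :
    Tendsto (fun k => ∫ u, |Fk k u - G u| ∂μ) atTop (nhds 0) := by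
  set g : ℝ → ℝ := fun u => 2 * |G u| with hg
  have hg_int : Integrable g μ := hG_int.abs.const_mul 2
  have hfk_int : ∀ k, Integrable (fun u => |Fk k u - G u|) μ := fun k =>
    ((hFk_int k).sub hG_int).abs
  have hgk_int : ∀ k, Integrable (fun u => |Fk k u| + |G u|) μ := fun k =>
    (hFk_int k).abs.add hG_int.abs
  have hmin_int : ∀ k, Integrable (fun u => min (|Fk k u - G u|) (g u)) μ := fun k =>
    (hfk_int k).inf hg_int
  have hmax_int : ∀ k, Integrable (fun u => max (g u - (|Fk k u| + |G u|)) 0) μ := fun k =>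
    (hg_int.sub (hgk_int k)).sup (integrable_const 0)
  -- pointwise bound
  have hptwise : ∀ k u, |Fk k u - G u| ≤
      min (|Fk k u - G u|) (g u) + ((|Fk k u| + |G u|) - g u)
        + max (g u - (|Fk k u| + |G u|)) 0 := by
    intro k u
    have h1 : |Fk k u - G u| ≤ |Fk k u| + |G u| := abs_sub _ _
    have h2 : max (g u - (|Fk k u| + |G u|)) 0 ≥ g u - (|Fk k u| + |G u|) := le_max_left _ _
    have h3 : max (g u - (|Fk k u| + |G u|)) 0 ≥ 0 := le_max_right _ _
    rcases le_total (|Fk k u - G u|) (g u) with h | h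
    · rw [min_eq_left h]; linarith
    · rw [min_eq_right h]; linarith
  -- the three upper sequences
  have hA : Tendsto (fun k => ∫ u, min (|Fk k u - G u|) (g u) ∂μ) atTop (nhds 0) := by
    have hconv := tendsto_integral_of_dominated_convergence (F := fun k u => min (|Fk k u - G u|) (g u))
      (f := fun _ => (0:ℝ)) (bound := g)
      (fun k => ((hfk_int k).inf hg_int).aestronglyMeasurable) hg_int ?_ ?_
    · simpa using hconv
    · intro k
      refine Filter.Eventually.of_forall fun u => ?_
      rw [Real.norm_eq_abs, abs_of_nonneg (le_min (abs_nonneg _) (by positivity))]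
      exact min_le_right _ _
    · filter_upwards [hae] with u hu
      have h1 : Tendsto (fun k => |Fk k u - G u|) atTop (nhds 0) := by
        have h2 := (hu.sub (tendsto_const_nhds (x := G u))).abs
        simpa using h2
      have h3 := h1.min (tendsto_const_nhds (x := g u))
      simpa [min_eq_left (by positivity : (0:ℝ) ≤ g u)] using h3
  have hB : Tendsto (fun k => ∫ u, ((|Fk k u| + |G u|) - g u) ∂μ) atTop (nhds 0) := by
    have heq : ∀ k, ∫ u, ((|Fk k u| + |G u|) - g u) ∂μ
        = (∫ u, |Fk k u| ∂μ) - ∫ u, |G u| ∂μ := by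
      intro k
      rw [integral_sub (hgk_int k) hg_int, integral_add (hFk_int k).abs hG_int.abs,
        hg, MeasureTheory.integral_const_mul]
      ring
    simp_rw [heq]
    have := hmoments.sub (tendsto_const_nhds (x := ∫ u, |G u| ∂μ))
    simpa using this
  have hC : Tendsto (fun k => ∫ u, max (g u - (|Fk k u| + |G u|)) 0 ∂μ) atTop (nhds 0) := by
    have hconv := tendsto_integral_of_dominated_convergence
      (F := fun k u => max (g u - (|Fk k u| + |G u|)) 0) (f := fun _ => (0:ℝ)) (bound := g)
      (fun k => (hmax_int k).aestronglyMeasurable) hg_int ?_ ?_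
    · simpa using hconv
    · intro k
      refine Filter.Eventually.of_forall fun u => ?_
      rw [Real.norm_eq_abs, abs_of_nonneg (le_max_right _ _)]
      refine max_le ?_ (by positivity)
      have : 0 ≤ |Fk k u| + |G u| := by positivity
      linarith
    · filter_upwards [hae] with u hu
      have h1 : Tendsto (fun k => g u - (|Fk k u| + |G u|)) atTop (nhds 0) := by
        have h2 : Tendsto (fun k => |Fk k u|) atTop (nhds (|G u|)) := hu.abs
        have := (tendsto_const_nhds (x := g u)).sub (h2.add (tendsto_const_nhds (x := |G u|)))
        simpa [hg, two_mul] using this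
      have := h1.max (tendsto_const_nhds (x := (0:ℝ)))
      simpa using this
  have hupper : Tendsto (fun k => (∫ u, min (|Fk k u - G u|) (g u) ∂μ)
      + (∫ u, ((|Fk k u| + |G u|) - g u) ∂μ)
      + (∫ u, max (g u - (|Fk k u| + |G u|)) 0 ∂μ)) atTop (nhds 0) := by
    have := (hA.add hB).add hC
    simpa using this
  refine tendsto_of_tendsto_of_tendsto_of_le_of_le tendsto_const_nhds hupper ?_ ?_
  · exact fun k => integral_nonneg fun u => abs_nonneg _
  · intro k
    have hI2 : Integrable (fun u => (|Fk k u| + |G u|) - g u) μ := (hgk_int k).sub hg_int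
    have hI1 : Integrable
        (fun u => min (|Fk k u - G u|) (g u) + ((|Fk k u| + |G u|) - g u)) μ :=
      (hmin_int k).add hI2
    calc ∫ u, |Fk k u - G u| ∂μ
        ≤ ∫ u, (min (|Fk k u - G u|) (g u) + ((|Fk k u| + |G u|) - g u)
            + max (g u - (|Fk k u| + |G u|)) 0) ∂μ := by
          exact integral_mono (hfk_int k) (hI1.add (hmax_int k)) (hptwise k)
      _ = _ := by
          rw [integral_add hI1 (hmax_int k), integral_add (hmin_int k) hI2]

end DCT

section AEConv

open Set

/-- Quantile clamped to a subinterval, as a globally monotone function. -/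
def clampQ (η : Measure ℝ) (n : ℕ) : ℝ → ℝ :=
  fun u => qtl η (max (1/(n+3 : ℝ)) (min u (1 - 1/(n+3 : ℝ))))

lemma an_pos (n : ℕ) : 0 < 1/(n+3 : ℝ) := by positivity

lemma an_lt (n : ℕ) : 1/(n+3 : ℝ) < 1 - 1/(n+3 : ℝ) := by
  have h3 : (3:ℝ) ≤ (n:ℝ) + 3 := by
    have : (0:ℝ) ≤ n := Nat.cast_nonneg n
    linarith
  have : 1/(n+3 : ℝ) ≤ 1/3 := by
    apply div_le_div_of_nonneg_left (by norm_num) (by norm_num) h3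
  linarith

lemma clamp_mem (η : Measure ℝ) (n : ℕ) (u : ℝ) :
    max (1/(n+3 : ℝ)) (min u (1 - 1/(n+3 : ℝ))) ∈ Ioo (0:ℝ) 1 := by
  constructor
  · exact lt_of_lt_of_le (an_pos n) (le_max_left _ _)
  · have h1 := an_lt n
    have h2 := an_pos n
    refine max_lt (by linarith) (lt_of_le_of_lt (min_le_right _ _) (by linarith))

lemma clampQ_mono (η : Measure ℝ) [IsProbabilityMeasure η] (n : ℕ) : Monotone (clampQ η n) := by
  intro u v huv
  refine qtl_monoOn (clamp_mem η n u) (clamp_mem η n v) ?_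
  exact max_le_max le_rfl (min_le_min huv le_rfl)

lemma clampQ_eq (η : Measure ℝ) (n : ℕ) {u : ℝ}
    (hu : u ∈ Icc (1/(n+3 : ℝ)) (1 - 1/(n+3 : ℝ))) : clampQ η n u = qtl η u := by
  unfold clampQ
  rw [min_eq_left hu.2, max_eq_right hu.1]

lemma qtl_tendsto_ae (σk : ℕ → Measure ℝ) (σ : Measure ℝ)
    [IsProbabilityMeasure σ] (hσk : ∀ k, IsProbabilityMeasure (σk k))
    (hσkint : ∀ k, Integrable (fun x : ℝ => x) (σk k))
    (hσint : Integrable (fun x : ℝ => x) σ)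
    (εk : ℕ → ℝ) (hεk : ∀ k x, |put (σk k) x - put σ x| ≤ εk k)
    (hε0 : Tendsto εk atTop (nhds 0)) :
    ∀ᵐ u ∂(volume.restrict (Ioo (0:ℝ) 1)),
      Tendsto (fun k => qtl (σk k) u) atTop (nhds (qtl σ u)) := by
  have hcount : (⋃ n, {u : ℝ | ¬ContinuousAt (clampQ σ n) u}).Countable :=
    Set.countable_iUnion fun n => (clampQ_mono σ n).countable_not_continuousAt
  have hN : ∀ᵐ u ∂volume, u ∉ ⋃ n, {u : ℝ | ¬ContinuousAt (clampQ σ n) u} :=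
    hcount.ae_notMem volume
  filter_upwards [ae_restrict_of_ae hN, ae_restrict_mem measurableSet_Ioo] with u hu huI
  -- u ∈ Ioo 0 1, and all clamped quantiles are continuous at u
  have hcont : ∀ n, ContinuousAt (clampQ σ n) u := by
    intro n
    by_contra hcontra
    exact hu (Set.mem_iUnion.mpr ⟨n, hcontra⟩)
  rw [Metric.tendsto_atTop]
  intro ε hε
  -- choose n with 1/(n+3) < min u (1-u)
  obtain ⟨n, hn⟩ := exists_nat_one_div_lt (lt_min huI.1 (by linarith [huI.2]) : (0:ℝ) < min u (1 - u))
  have hn3 : 1/(n+3 : ℝ) < min u (1 - u) := by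
    refine lt_of_le_of_lt ?_ hn
    apply div_le_div_of_nonneg_left (by norm_num) (by positivity) (by push_cast; linarith)
  set a := 1/(n+3 : ℝ) with ha
  have hapos := an_pos n
  have hau1 : a < u := lt_of_lt_of_le hn3 (min_le_left _ _)
  have hau2 : u < 1 - a := by
    have := lt_of_lt_of_le hn3 (min_le_right _ _)
    linarith
  -- continuity at u gives δ₀
  obtain ⟨δ₀, hδ₀pos, hδ₀⟩ := Metric.continuousAt_iff.mp (hcont n) (ε/2) (by linarith)
  set δ := min (δ₀/2) (min ((u - a)/2) ((1 - a - u)/2)) with hδdef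
  have hδpos : 0 < δ := by
    refine lt_min (by linarith) (lt_min (by linarith) (by linarith))
  have hδ1 : δ ≤ δ₀/2 := min_le_left _ _
  have hδ2 : δ ≤ (u - a)/2 := le_trans (min_le_right _ _) (min_le_left _ _)
  have hδ3 : δ ≤ (1 - a - u)/2 := le_trans (min_le_right _ _) (min_le_right _ _)
  have hmemp : u + δ ∈ Icc a (1 - a) := ⟨by linarith, by linarith⟩
  have hmemm : u - δ ∈ Icc a (1 - a) := ⟨by linarith, by linarith⟩
  have hmemu : u ∈ Icc a (1 - a) := ⟨by linarith, by linarith⟩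
  have hIoo : ∀ v ∈ Icc a (1 - a), v ∈ Ioo (0:ℝ) 1 := by
    intro v hv
    exact ⟨lt_of_lt_of_le hapos hv.1, lt_of_le_of_lt hv.2 (by linarith)⟩
  have hd1 : dist (u + δ) u < δ₀ := by
    rw [Real.dist_eq, show u + δ - u = δ by ring, abs_of_pos hδpos]
    linarith
  have hd2 : dist (u - δ) u < δ₀ := by
    rw [Real.dist_eq, show u - δ - u = -δ by ring, abs_neg, abs_of_pos hδpos]
    linarith
  have hcp : |qtl σ (u + δ) - qtl σ u| < ε/2 := by
    have h := hδ₀ hd1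
    rw [Real.dist_eq, clampQ_eq σ n hmemp, clampQ_eq σ n hmemu] at h
    exact h
  have hcm : |qtl σ (u - δ) - qtl σ u| < ε/2 := by
    have h := hδ₀ hd2
    rw [Real.dist_eq, clampQ_eq σ n hmemm, clampQ_eq σ n hmemu] at h
    exact h
  -- eventually the εk are small
  have hev : ∀ᶠ k in atTop, |εk k| < ε * δ / 8 := by
    have := hε0.abs
    simp only [abs_zero] at this
    exact this.eventually (eventually_lt_nhds (by positivity))
  rw [Filter.eventually_atTop] at hev
  obtain ⟨N, hNk⟩ := hev
  refine ⟨N, fun k hk => ?_⟩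
  haveI := hσk k
  have hcbound : ∀ x, |put (σk k) x - put σ x| ≤ εk k := hεk k
  have hcbound' : ∀ x, |put σ x - put (σk k) x| ≤ εk k := fun x => by
    rw [abs_sub_comm]; exact hcbound x
  have hub : qtl (σk k) u ≤ qtl σ (u + δ) + 2 * εk k / δ :=
    qtl_le_qtl_add (hσkint k) hσint hcbound hδpos (hIoo u hmemu) (hIoo _ hmemp)
  have hlb : qtl σ (u - δ) ≤ qtl (σk k) ((u - δ) + δ) + 2 * εk k / δ :=
    qtl_le_qtl_add hσint (hσkint k) hcbound' hδpos (hIoo _ hmemm)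
      (by rw [show u - δ + δ = u by ring]; exact hIoo u hmemu)
  rw [show u - δ + δ = u by ring] at hlb
  have hsmall : 2 * εk k / δ ≤ ε / 4 := by
    have h1 : εk k < ε * δ / 8 := lt_of_le_of_lt (le_abs_self _) (hNk k hk)
    rw [div_le_iff₀ hδpos]
    nlinarith
  have h1 := abs_lt.mp hcp
  have h2 := abs_lt.mp hcm
  rw [Real.dist_eq, abs_lt]
  constructor
  · -- qtl σ u - ε < qtl σk u
    have : qtl σ u - ε/2 - ε/4 ≤ qtl (σk k) u := by linarith
    linarith
  · have : qtl (σk k) u ≤ qtl σ u + ε/2 + ε/4 := by linarith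
    linarith

end AEConv


theorem W1_convergence_of_cd_min (μk νk : ℕ → Measure ℝ) (μ ν : Measure ℝ)
    [IsProbabilityMeasure μ] [IsProbabilityMeasure ν]
    (hμk : ∀ k, IsProbabilityMeasure (μk k)) (hνk : ∀ k, IsProbabilityMeasure (νk k))
    (hμint : Integrable (fun x : ℝ => x) μ) (hνint : Integrable (fun x : ℝ => x) ν)
    (hμkint : ∀ k, Integrable (fun x : ℝ => x) (μk k))
    (hνkint : ∀ k, Integrable (fun x : ℝ => x) (νk k))
    (hμW : Tendsto (fun k => W1 (μk k) μ) atTop (nhds 0))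
    (hνW : Tendsto (fun k => W1 (νk k) ν) atTop (nhds 0))
    (σk : ℕ → Measure ℝ) (σ : Measure ℝ)
    (hσk : ∀ k, IsProbabilityMeasure (σk k)) (hσ : IsProbabilityMeasure σ)
    (hσkint : ∀ k, Integrable (fun x : ℝ => x) (σk k))
    (hσint : Integrable (fun x : ℝ => x) σ)
    (hputk : ∀ k, ∀ x : ℝ,
      put (σk k) x = convexMinorant (fun s => min (put (μk k) s) (put (νk k) s)) x)
    (hput : ∀ x : ℝ,
      put σ x = convexMinorant (fun s => min (put μ s) (put ν s)) x) :
    Tendsto (fun k => W1 (σk k) σ) atTop (nhds 0) := by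
  haveI := hσ
  set εk : ℕ → ℝ := fun k => max (W1 (μk k) μ) (W1 (νk k) ν) with hεdef
  have hε0 : Tendsto εk atTop (nhds 0) := by
    have := hμW.max hνW
    simpa using this
  have hεnn : ∀ k, 0 ≤ εk k := by
    intro k
    haveI := hμk k
    exact le_trans (W1_nonneg (μk k) μ) (le_max_left _ _)
  have hsand : ∀ k x, |put (σk k) x - put σ x| ≤ εk k := by
    intro k x
    haveI := hμk k; haveI := hνk k
    have h1 : ∀ s, |put (μk k) s - put μ s| ≤ εk k := fun s =>
      (abs_put_sub_put_le_W1 (hμkint k) hμint s).trans (le_max_left _ _)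
    have h2 : ∀ s, |put (νk k) s - put ν s| ≤ εk k := fun s =>
      (abs_put_sub_put_le_W1 (hνkint k) hνint s).trans (le_max_right _ _)
    have hmindiff : ∀ s, |min (put (μk k) s) (put (νk k) s) - min (put μ s) (put ν s)| ≤ εk k :=
      fun s => (abs_min_sub_min_le_max _ _ _ _).trans (max_le (h1 s) (h2 s))
    have hminle : ∀ s, min (put (μk k) s) (put (νk k) s) ≤ min (put μ s) (put ν s) + εk k :=
      fun s => by linarith [(abs_le.mp (hmindiff s)).2]
    have hminge : ∀ s, min (put μ s) (put ν s) ≤ min (put (μk k) s) (put (νk k) s) + εk k :=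
      fun s => by linarith [(abs_le.mp (hmindiff s)).1]
    have hnn1 : ∀ s, 0 ≤ min (put μ s) (put ν s) :=
      fun s => le_min (put_nonneg μ s) (put_nonneg ν s)
    have hnn2 : ∀ s, 0 ≤ min (put (μk k) s) (put (νk k) s) :=
      fun s => le_min (put_nonneg _ s) (put_nonneg _ s)
    have hA := convexMinorant_le_shift hnn1 (hεnn k) hminle x
    have hB := convexMinorant_le_shift hnn2 (hεnn k) hminge x
    rw [hputk k x, hput x, abs_le]
    constructor <;> linarith
  -- mean and put-at-0 convergence
  have hmean : Tendsto (fun k => ∫ t, t ∂(σk k)) atTop (nhds (∫ t, t ∂σ)) := by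
    have h0 : Tendsto (fun k => (∫ t, t ∂(σk k)) - ∫ t, t ∂σ) atTop (nhds 0) := by
      refine squeeze_zero_norm (fun k => ?_) hε0
      rw [Real.norm_eq_abs]
      haveI := hσk k
      exact abs_mean_sub_mean_le (hσkint k) hσint (hsand k)
    have := h0.add (tendsto_const_nhds (x := ∫ t, t ∂σ))
    simpa using this
  have hput0 : Tendsto (fun k => put (σk k) 0) atTop (nhds (put σ 0)) := by
    have h0 : Tendsto (fun k => put (σk k) 0 - put σ 0) atTop (nhds 0) := by
      refine squeeze_zero_norm (fun k => ?_) hε0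
      rw [Real.norm_eq_abs]
      exact hsand k 0
    have := h0.add (tendsto_const_nhds (x := put σ 0))
    simpa using this
  have habs : Tendsto (fun k => ∫ t, |t| ∂(σk k)) atTop (nhds (∫ t, |t| ∂σ)) := by
    have heq : ∀ k, ∫ t, |t| ∂(σk k) = (∫ t, t ∂(σk k)) + 2 * put (σk k) 0 := by
      intro k
      haveI := hσk k
      exact integral_abs_eq _ (hσkint k)
    rw [integral_abs_eq σ hσint]
    have hsum := hmean.add (hput0.const_mul 2)
    have hgoal : Tendsto (fun k => (∫ t, t ∂(σk k)) + 2 * put (σk k) 0) atTop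
        (nhds ((∫ t, t ∂σ) + 2 * put σ 0)) := by
      simpa [mul_comm] using hsum
    exact hgoal.congr fun k => (heq k).symm
  -- quantile couplings
  set lam := volume.restrict (Set.Ioo (0:ℝ) 1) with hlam
  haveI : IsProbabilityMeasure lam := unif_prob
  have hQm : Measurable (qtl σ) := measurable_qtl σ
  have hQkm : ∀ k, Measurable (qtl (σk k)) := fun k => by
    haveI := hσk k; exact measurable_qtl _
  have hmapk : ∀ k, Measure.map (qtl (σk k)) lam = σk k := fun k => by
    haveI := hσk k; exact map_qtl _
  have hmap : Measure.map (qtl σ) lam = σ := map_qtl σ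
  have hQint : Integrable (qtl σ) lam := by
    have h := (integrable_map_measure (f := qtl σ) (g := fun x : ℝ => x)
      (by rw [hmap]; exact hσint.aestronglyMeasurable) hQm.aemeasurable).mp
      (by rw [hmap]; exact hσint)
    exact h
  have hQkint : ∀ k, Integrable (qtl (σk k)) lam := by
    intro k
    have h := (integrable_map_measure (f := qtl (σk k)) (g := fun x : ℝ => x)
      (by rw [hmapk k]; exact (hσkint k).aestronglyMeasurable) (hQkm k).aemeasurable).mp
      (by rw [hmapk k]; exact hσkint k)
    exact h
  have hmoments : Tendsto (fun k => ∫ u, |qtl (σk k) u| ∂lam) atTop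
      (nhds (∫ u, |qtl σ u| ∂lam)) := by
    have h1 : ∀ k, ∫ t, |t| ∂(σk k) = ∫ u, |qtl (σk k) u| ∂lam := by
      intro k
      conv_lhs => rw [← hmapk k]
      rw [integral_map (hQkm k).aemeasurable continuous_abs.aestronglyMeasurable]
    have h2 : ∫ t, |t| ∂σ = ∫ u, |qtl σ u| ∂lam := by
      conv_lhs => rw [← hmap]
      rw [integral_map hQm.aemeasurable continuous_abs.aestronglyMeasurable]
    have := habs
    rw [h2] at this
    exact this.congr fun k => h1 k
  have hae := qtl_tendsto_ae σk σ hσk hσkint hσint εk hsand hε0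
  have hL1 : Tendsto (fun k => ∫ u, |qtl (σk k) u - qtl σ u| ∂lam) atTop (nhds 0) :=
    tendsto_integral_abs_sub hQkint hQint hae hmoments
  -- conclude via the quantile coupling
  refine tendsto_of_tendsto_of_tendsto_of_le_of_le tendsto_const_nhds hL1 ?_ ?_
  · intro k
    haveI := hσk k
    exact W1_nonneg (σk k) σ
  · intro k
    haveI := hσk k
    set πk := Measure.map (fun u => (qtl (σk k) u, qtl σ u)) lam with hπk
    have hpairm : Measurable (fun u => (qtl (σk k) u, qtl σ u)) := (hQkm k).prodMk hQm
    have hcoup : πk ∈ Couplings (σk k) σ := by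
      constructor
      · rw [hπk, Measure.map_map measurable_fst hpairm]
        exact hmapk k
      · rw [hπk, Measure.map_map measurable_snd hpairm]
        exact hmap
    have hcost : ∫ p, |p.1 - p.2| ∂πk = ∫ u, |qtl (σk k) u - qtl σ u| ∂lam := by
      rw [hπk, integral_map hpairm.aemeasurable]
      exact (continuous_fst.sub continuous_snd).abs.aestronglyMeasurable
    exact (W1_le_cost hcoup).trans (le_of_eq hcost)
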